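/- The operators π_i = ∂_i ∘ (1+β b_{i+1}) satisfy the braid relation π_i π_{i+1} π_i = π_{i+1} π_i π_{i+1} on ℤ[β][b_1, b_2, …]. -/

import Mathlib

noncomputable section

/-- Fraction field of `ℤ[β][b₁,b₂,…]`: variable `0` is `β`, variable `i ≥ 1` is `b_i`. -/
abbrev FF : Type := FractionRing (MvPolynomial ℕ ℤ)

/-- The variables `b_i` (and `β = bb 0`) inside the fraction field. -/
def bb (i : ℕ) : FF := algebraMap (MvPolynomial ℕ ℤ) FF (MvPolynomial.X i)

/-- `β`. -/
def ββ : FF := bb 0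

/-- The involution `s_i` exchanging `b_i` and `b_{i+1}`. -/
def sw (i : ℕ) : FF ≃+* FF :=
  IsFractionRing.ringEquivOfRingEquiv
    ((MvPolynomial.renameEquiv ℤ (Equiv.swap i (i + 1))).toRingEquiv)

/-- Divided difference `∂_i f = (f - s_i f)/(b_i - b_{i+1})`. -/
def ddif (i : ℕ) (f : FF) : FF := (f - sw i f) / (bb i - bb (i + 1))

/-- The β-deformed divided difference operator `π_i = ∂_i ∘ (1 + β b_{i+1})`. -/
def pii (i : ℕ) (f : FF) : FF := ddif i ((1 + ββ * bb (i + 1)) * f)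

lemma sw_bb (i j : ℕ) : sw i (bb j) = bb (Equiv.swap i (i+1) j) := by
  unfold sw bb
  rw [IsFractionRing.ringEquivOfRingEquiv_algebraMap]
  simp

lemma bb_sub_ne (i j : ℕ) (h : i ≠ j) : bb i - bb j ≠ 0 := by
  unfold bb
  rw [← map_sub]
  intro hc
  have h2 : (MvPolynomial.X i - MvPolynomial.X j : MvPolynomial ℕ ℤ) = 0 := by
    have := IsFractionRing.injective (MvPolynomial ℕ ℤ) FF
    exact this (by simpa using hc)
  have : (MvPolynomial.X i : MvPolynomial ℕ ℤ) = MvPolynomial.X j := by linear_combination h2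
  exact h (MvPolynomial.X_injective this)

lemma swap_braid (i : ℕ) : Equiv.swap i (i+1) * Equiv.swap (i+1) (i+2) * Equiv.swap i (i+1)
    = Equiv.swap (i+1) (i+2) * Equiv.swap i (i+1) * Equiv.swap (i+1) (i+2) := by
  have h1 := Equiv.swap_mul_swap_mul_swap (show (i+2:ℕ) ≠ i+1 by omega) (show (i+2:ℕ) ≠ i by omega)
  have h2 := Equiv.swap_mul_swap_mul_swap (show i ≠ i+1 by omega) (show i ≠ (i+2:ℕ) by omega)
  rw [Equiv.swap_comm (i+1) i, Equiv.swap_comm (i+2) (i+1)] at h1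
  rw [h1, h2, Equiv.swap_comm]

lemma swap_braid' (i j : ℕ) : Equiv.swap i (i+1) (Equiv.swap (i+1) (i+2) (Equiv.swap i (i+1) j))
    = Equiv.swap (i+1) (i+2) (Equiv.swap i (i+1) (Equiv.swap (i+1) (i+2) j)) := by
  have := congrFun (congrArg (fun e : Equiv.Perm ℕ => (e : ℕ → ℕ)) (swap_braid i)) j
  simpa [Equiv.Perm.mul_apply] using this

lemma sw_sw (i : ℕ) (f : FF) : sw i (sw i f) = f := by
  have h : ((sw i : FF →+* FF).comp (sw i : FF →+* FF)) = RingHom.id FF := by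
    apply IsLocalization.ringHom_ext (nonZeroDivisors (MvPolynomial ℕ ℤ))
    apply MvPolynomial.ringHom_ext
    · intro r; simp [map_intCast]
    · intro j
      simp only [RingHom.comp_apply, RingHom.coe_coe, RingHom.id_apply]
      show sw i (sw i (bb j)) = bb j
      simp only [sw_bb, Equiv.swap_apply_self]
  exact RingHom.congr_fun h f

lemma sw_braid (i : ℕ) (f : FF) : sw i (sw (i+1) (sw i f)) = sw (i+1) (sw i (sw (i+1) f)) := by
  have h : ((sw i : FF →+* FF).comp ((sw (i+1) : FF →+* FF).comp (sw i : FF →+* FF)))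
      = ((sw (i+1) : FF →+* FF).comp ((sw i : FF →+* FF).comp (sw (i+1) : FF →+* FF))) := by
    apply IsLocalization.ringHom_ext (nonZeroDivisors (MvPolynomial ℕ ℤ))
    apply MvPolynomial.ringHom_ext
    · intro r; simp [map_intCast]
    · intro j
      simp only [RingHom.comp_apply, RingHom.coe_coe]
      show sw i (sw (i+1) (sw i (bb j))) = sw (i+1) (sw i (sw (i+1) (bb j)))
      simp only [sw_bb]
      rw [show i+1+1 = i+2 from rfl, swap_braid' i j]
  exact RingHom.congr_fun h f

set_option maxHeartbeats 4000000 in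
lemma key_braid {K : Type*} [Field K] (β x y z f F1 F2 F12 F21 F121 : K)
    (hxy : x - y ≠ 0) (hyz : y - z ≠ 0) (hxz : x - z ≠ 0) :
    ((1 + β * y) *
          (((1 + β * z) * (((1 + β * y) * f - (1 + β * x) * F1) / (x - y)) -
              (1 + β * y) * (((1 + β * z) * F2 - (1 + β * x) * F21) / (x - z))) /
            (y - z)) -
        (1 + β * x) *
          (((1 + β * z) * (((1 + β * x) * F1 - (1 + β * y) * f) / (y - x)) -
              (1 + β * x) * (((1 + β * z) * F12 - (1 + β * y) * F121) / (y - z))) /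
            (x - z))) /
      (x - y) =
    ((1 + β * z) *
          (((1 + β * y) * (((1 + β * z) * f - (1 + β * y) * F2) / (y - z)) -
              (1 + β * x) * (((1 + β * z) * F1 - (1 + β * x) * F12) / (x - z))) /
            (x - y)) -
        (1 + β * y) *
          (((1 + β * z) * (((1 + β * y) * F2 - (1 + β * z) * f) / (z - y)) -
              (1 + β * x) * (((1 + β * y) * F21 - (1 + β * x) * F121) / (x - y))) /
            (x - z))) /
      (y - z) := by
  rw [show y - x = -(x - y) by ring, show z - y = -(y - z) by ring, div_neg, div_neg]
  field_simp
  ring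

set_option maxHeartbeats 2000000 in
set_option synthInstance.maxHeartbeats 400000 in
/-- The operators `π_i = ∂_i ∘ (1+β b_{i+1})` satisfy the braid relation
`π_i π_{i+1} π_i = π_{i+1} π_i π_{i+1}` on `ℤ[β][b₁,b₂,…]` (stated on the field of
fractions, for all `i ≥ 1`). -/
theorem stmt_14 : ∀ i : ℕ, 1 ≤ i → ∀ f : FF,
    pii i (pii (i + 1) (pii i f)) = pii (i + 1) (pii i (pii (i + 1) f)) := by
  intro i hi f
  have hxy : bb i - bb (i+1) ≠ 0 := bb_sub_ne _ _ (by omega)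
  have hyz : bb (i+1) - bb (i+2) ≠ 0 := bb_sub_ne _ _ (by omega)
  have e1 : sw i (bb i) = bb (i+1) := by rw [sw_bb, Equiv.swap_apply_left]
  have e2 : sw i (bb (i+1)) = bb i := by rw [sw_bb, Equiv.swap_apply_right]
  have e3 : sw i (bb (i+2)) = bb (i+2) := by
    rw [sw_bb, Equiv.swap_apply_of_ne_of_ne (by omega) (by omega)]
  have e0 : sw i ββ = ββ := by
    unfold ββ; rw [sw_bb, Equiv.swap_apply_of_ne_of_ne (by omega) (by omega)]
  have g1 : sw (i+1) (bb (i+1)) = bb (i+2) := by rw [sw_bb, Equiv.swap_apply_left]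
  have g2 : sw (i+1) (bb (i+2)) = bb (i+1) := by
    rw [show i+2 = i+1+1 from rfl, sw_bb, Equiv.swap_apply_right]
  have g3 : sw (i+1) (bb i) = bb i := by
    rw [sw_bb, Equiv.swap_apply_of_ne_of_ne (by omega) (by omega)]
  have g0 : sw (i+1) ββ = ββ := by
    unfold ββ; rw [sw_bb, Equiv.swap_apply_of_ne_of_ne (by omega) (by omega)]
  have hbr := sw_braid i f
  have h2 : i + 1 + 1 = i + 2 := rfl
  simp only [pii, ddif, h2, map_mul, map_add, map_sub, map_one, map_div₀,
    e0, e1, e2, e3, g0, g1, g2, g3, hbr, sw_sw]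
  set x := bb i
  set y := bb (i+1)
  set z := bb (i+2)
  set β := ββ
  set F1 := sw i f
  set F2 := sw (i+1) f
  set F12 := sw i (sw (i+1) f)
  set F21 := sw (i+1) (sw i f)
  set F121 := sw (i+1) (sw i (sw (i+1) f))
  have hxz : x - z ≠ 0 := bb_sub_ne _ _ (by omega)
  exact key_braid β x y z f F1 F2 F12 F21 F121 hxy hyz hxz
end
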